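/- Let x⋆ be a mode of f and let B be its basin of attraction. Then the gradient ascent flow, viewed as the map sending x ∈ B to the set γ_x([0,∞)) ⊆ ℝ^d, is continuous on B with respect to the Hausdorff distance: for every x ∈ B and every η > 0 there exists δ > 0 such that for all y with ‖y − x‖ < δ, the Hausdorff distance between γ_x([0,∞)) and γ_y([0,∞)) is less than η. -/

import Mathlib

open Metric Set Filter MeasureTheory Topology
open scoped Topology RealInnerProductSpace

abbrev Euc (d : ℕ) := EuclideanSpace ℝ (Fin d)

/-- The Hessian of `f`, as the derivative of the gradient field. -/
noncomputable def hess {d : ℕ} (f : Euc d → ℝ) (x : Euc d) : Euc d →L[ℝ] Euc d :=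
  fderiv ℝ (gradient f) x

/-- The standing assumptions on the density `f`: nonnegative, integrable, vanishing at
infinity, twice differentiable with bounded and uniformly continuous zeroth, first and
second derivatives, and Morse (nonsingular Hessian at every critical point). -/
def IsNiceDensity {d : ℕ} (f : Euc d → ℝ) : Prop :=
  (∀ x, 0 ≤ f x) ∧
  Integrable f volume ∧
  Tendsto f (cocompact (Euc d)) (𝓝 0) ∧
  Differentiable ℝ f ∧
  Differentiable ℝ (gradient f) ∧
  (∃ M, ∀ x, |f x| ≤ M) ∧
  (∃ M, ∀ x, ‖gradient f x‖ ≤ M) ∧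
  (∃ M, ∀ x, ‖hess f x‖ ≤ M) ∧
  UniformContinuous f ∧
  UniformContinuous (gradient f) ∧
  UniformContinuous (hess f) ∧
  (∀ x, gradient f x = 0 → Function.Bijective (hess f x))

/-- `γ` is the gradient ascent curve of `f` starting at `x`, defined on `[0, ∞)`. -/
def IsGradFlow {d : ℕ} (f : Euc d → ℝ) (x : Euc d) (γ : ℝ → Euc d) : Prop :=
  γ 0 = x ∧ ∀ t ∈ Ici (0:ℝ), HasDerivWithinAt γ (gradient f (γ t)) (Ici 0) t

section AuxLemmas

variable {d : ℕ} {f : Euc d → ℝ}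

lemma inner_gradient_eq (f : Euc d → ℝ) (z v : Euc d) :
    ⟪gradient f z, v⟫ = fderiv ℝ f z v :=
  InnerProductSpace.toDual_symm_apply

/-- Quadratic approximation of the gradient near a critical point. -/
lemma grad_approx (hgdiff : Differentiable ℝ (gradient f)) (hUCh : UniformContinuous (hess f))
    (xstar : Euc d) (hgrad0 : gradient f xstar = 0) {ε : ℝ} (hε : 0 < ε) :
    ∃ ρ > 0, ∀ z ∈ ball xstar ρ,
      ‖gradient f z - hess f xstar (z - xstar)‖ ≤ ε * ‖z - xstar‖ := by
  have hc : ContinuousAt (hess f) xstar := hUCh.continuous.continuousAt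
  obtain ⟨ρ, hρ, hball⟩ := Metric.continuousAt_iff.mp hc ε hε
  refine ⟨ρ, hρ, fun z hz => ?_⟩
  set A := hess f xstar with hA
  set g : Euc d → Euc d := fun w => gradient f w - (A w - A xstar) with hg
  have hgd : ∀ w ∈ ball xstar ρ, HasFDerivWithinAt g (hess f w - A) (ball xstar ρ) w := by
    intro w _
    exact (((hgdiff w).hasFDerivAt).sub ((A.hasFDerivAt).sub_const (A xstar))).hasFDerivWithinAt
  have hbd : ∀ w ∈ ball xstar ρ, ‖hess f w - A‖ ≤ ε := by
    intro w hw
    have := hball (mem_ball.mp hw)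
    rw [dist_eq_norm] at this
    exact this.le
  have hkey := Convex.norm_image_sub_le_of_norm_hasFDerivWithin_le hgd hbd (convex_ball _ _)
      (mem_ball_self hρ) hz
  have h1 : g xstar = 0 := by simp [hg, hgrad0]
  have h2 : g z - g xstar = gradient f z - A (z - xstar) := by
    rw [h1, sub_zero, hg, map_sub]
  rw [h2] at hkey
  exact hkey

/-- The Hessian is a symmetric bilinear form. -/
lemma hess_symm_aux (hdiff : Differentiable ℝ f) (hgdiff : Differentiable ℝ (gradient f))
    (x0 : Euc d) : ∀ u v : Euc d, ⟪hess f x0 u, v⟫ = ⟪hess f x0 v, u⟫ := by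
  set e := InnerProductSpace.toDual ℝ (Euc d) with he
  set T := e.toLinearIsometry.toContinuousLinearMap with hT
  have hF : ∀ y, HasFDerivAt f (fderiv ℝ f y) y := fun y => (hdiff y).hasFDerivAt
  have heq : fderiv ℝ f = fun z => T (gradient f z) := by
    funext z
    show fderiv ℝ f z = e (gradient f z)
    exact (e.apply_symm_apply (fderiv ℝ f z)).symm
  have key : HasFDerivAt (fderiv ℝ f) (T.comp (hess f x0)) x0 := by
    rw [heq]
    exact T.hasFDerivAt.comp x0 (hgdiff x0).hasFDerivAt
  have hsymm := second_derivative_symmetric hF key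
  intro u v
  have h1 := hsymm u v
  simpa [hT, he, InnerProductSpace.toDual_apply_apply] using h1

/-- The Hessian at a local maximum is negative semidefinite. -/
lemma hess_nonpos (hdiff : Differentiable ℝ f)
    (hgdiff : Differentiable ℝ (gradient f)) (hUCh : UniformContinuous (hess f))
    (xstar : Euc d) (hmode : IsLocalMax f xstar) (hgrad0 : gradient f xstar = 0) :
    ∀ v : Euc d, ⟪hess f xstar v, v⟫ ≤ 0 := by
  intro v
  by_contra hpos
  push_neg at hpos
  have hv0 : v ≠ 0 := by
    intro h
    rw [h] at hpos; simp at hpos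
  have hnv : (0:ℝ) < ‖v‖ := norm_pos_iff.mpr hv0
  set A := hess f xstar with hA
  set Q := (⟪A v, v⟫ : ℝ) with hQdef
  have hε : (0:ℝ) < Q / (2 * ‖v‖^2) := by positivity
  obtain ⟨ρ, hρ, happrox⟩ := grad_approx hgdiff hUCh xstar hgrad0 hε
  set ρ' := ρ / (2 * ‖v‖) with hρ'
  have hρ'pos : 0 < ρ' := by positivity
  set c : ℝ → Euc d := fun t => xstar + t • v with hc
  have hcd : ∀ t : ℝ, HasDerivAt c v t := by
    intro t
    simpa [hc] using ((hasDerivAt_id t).smul_const v).const_add xstar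
  have hgd : ∀ t : ℝ, HasDerivAt (fun t => f (c t)) (⟪gradient f (c t), v⟫) t := by
    intro t
    have h1 := ((hdiff (c t)).hasFDerivAt).comp_hasDerivAt t (hcd t)
    rw [inner_gradient_eq]
    exact h1
  have hderivpos : ∀ t ∈ interior (Icc (0:ℝ) ρ'), 0 < deriv (fun t => f (c t)) t := by
    intro t ht
    rw [interior_Icc] at ht
    rw [(hgd t).deriv]
    have htpos := ht.1
    have hsub : c t - xstar = t • v := by rw [hc]; simp
    have hnorm : ‖t • v‖ = t * ‖v‖ := by
      rw [norm_smul, Real.norm_eq_abs, abs_of_pos htpos]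
    have hmem : c t ∈ ball xstar ρ := by
      have hd : dist (c t) xstar = t * ‖v‖ := by
        rw [dist_eq_norm, hsub, hnorm]
      rw [mem_ball, hd]
      have h1 : t * ‖v‖ < ρ' * ‖v‖ := by
        exact mul_lt_mul_of_pos_right ht.2 hnv
      have h2 : ρ' * ‖v‖ = ρ / 2 := by
        rw [hρ']; field_simp
      nlinarith
    have herr := happrox (c t) hmem
    rw [hsub, hnorm] at herr
    have hAtv : (⟪A (t • v), v⟫ : ℝ) = t * Q := by
      rw [A.map_smul, real_inner_smul_left]
    have hsplit : (⟪gradient f (c t), v⟫ : ℝ)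
        = ⟪A (t • v), v⟫ + ⟪gradient f (c t) - A (t • v), v⟫ := by
      rw [← inner_add_left]
      congr 1
      abel
    have hcs : -(Q / (2 * ‖v‖^2) * (t * ‖v‖) * ‖v‖) ≤ (⟪gradient f (c t) - A (t • v), v⟫ : ℝ) := by
      have h1 := abs_real_inner_le_norm (gradient f (c t) - A (t • v)) v
      have h2 := neg_abs_le (⟪gradient f (c t) - A (t • v), v⟫ : ℝ)
      nlinarith [mul_le_mul_of_nonneg_right herr (norm_nonneg v)]
    have hq : Q / (2 * ‖v‖^2) * (t * ‖v‖) * ‖v‖ = t * Q / 2 := by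
      field_simp
    rw [hq] at hcs
    rw [hsplit, hAtv]
    nlinarith [mul_pos htpos hpos]
  have hmono : StrictMonoOn (fun t => f (c t)) (Icc 0 ρ') := by
    apply strictMonoOn_of_deriv_pos (convex_Icc _ _)
    · exact fun t _ => ((hgd t).continuousAt).continuousWithinAt
    · exact hderivpos
  have hcont : Tendsto c (𝓝 0) (𝓝 xstar) := by
    have : Continuous c := continuous_const.add (continuous_id.smul continuous_const)
    have h0 : c 0 = xstar := by simp [hc]
    simpa [h0] using this.tendsto 0
  have hev : ∀ᶠ t in 𝓝 (0:ℝ), f (c t) ≤ f xstar := hcont.eventually hmode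
  have hev' : ∀ᶠ t in 𝓝[>] (0:ℝ), f (c t) ≤ f xstar := nhdsWithin_le_nhds hev
  have hev2 : ∀ᶠ t in 𝓝[>] (0:ℝ), t ∈ Ioo 0 ρ' := Ioo_mem_nhdsGT hρ'pos
  obtain ⟨t, ht1, ht2⟩ := (hev'.and hev2).exists
  have : f (c 0) < f (c t) := hmono ⟨le_refl 0, hρ'pos.le⟩ ⟨ht2.1.le, ht2.2.le⟩ ht2.1
  have hc0 : c 0 = xstar := by simp [hc]
  rw [hc0] at this
  linarith

/-- At a nondegenerate local maximum the Hessian is negative definite,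
quantitatively. -/
lemma hess_neg_def {xstar : Euc d} (hd : 0 < d)
    (hnonpos : ∀ v : Euc d, ⟪hess f xstar v, v⟫ ≤ 0)
    (hsym : ∀ u v : Euc d, ⟪hess f xstar u, v⟫ = ⟪hess f xstar v, u⟫)
    (hbij : Function.Bijective (hess f xstar)) :
    ∃ lam > (0:ℝ), ∀ v : Euc d, ⟪hess f xstar v, v⟫ ≤ -lam * ‖v‖^2 := by
  set A := hess f xstar with hA
  haveI : Nonempty (Fin d) := ⟨⟨0, hd⟩⟩
  haveI : Nontrivial (Euc d) := inferInstance
  have hne : (sphere (0:Euc d) 1).Nonempty := NormedSpace.sphere_nonempty.mpr zero_le_one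
  have hQc : Continuous fun v : Euc d => (⟪A v, v⟫ : ℝ) := A.continuous.inner continuous_id
  obtain ⟨v0, hv0s, hmax⟩ := (isCompact_sphere (0:Euc d) 1).exists_isMaxOn hne hQc.continuousOn
  have hv0norm : ‖v0‖ = 1 := mem_sphere_zero_iff_norm.mp hv0s
  have hQv0neg : (⟪A v0, v0⟫ : ℝ) < 0 := by
    rcases lt_or_eq_of_le (hnonpos v0) with h | h
    · exact h
    · exfalso
      have hc0 : ∀ w : Euc d, (⟪A v0, w⟫ : ℝ) = 0 := by
        intro w
        set cc := (⟪A v0, w⟫ : ℝ) with hcc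
        set q := (⟪A w, w⟫ : ℝ) with hq'
        have hq : q ≤ 0 := hnonpos w
        have hexp : ∀ t : ℝ, 2*t*cc + t^2*q ≤ 0 := by
          intro t
          have h0 := hnonpos (v0 + t • w)
          have hx : (⟪A (v0 + t • w), v0 + t • w⟫ : ℝ)
              = ⟪A v0, v0⟫ + t * ⟪A v0, w⟫ + t * ⟪A w, v0⟫ + t^2 * ⟪A w, w⟫ := by
            rw [map_add, A.map_smul, inner_add_left, inner_add_right, inner_add_right,
              real_inner_smul_left, real_inner_smul_left, real_inner_smul_right,
              real_inner_smul_right]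
            ring
          rw [hx, hsym w v0] at h0
          rw [hcc, hq']
          linarith [h0, h]
        have hs : (0:ℝ) < 1 - q := by linarith
        have ht := hexp (cc / (1 - q))
        have hcc2 : cc^2 * (2 - q) ≤ 0 := by
          have h3 : 2*(cc/(1-q))*cc + (cc/(1-q))^2*q ≤ 0 := ht
          have h4 := mul_le_mul_of_nonneg_left h3 (le_of_lt (mul_pos hs hs))
          calc cc^2 * (2 - q) = (1-q)*(1-q) * (2*(cc/(1-q))*cc + (cc/(1-q))^2*q) := by
                field_simp; ring
          _ ≤ (1-q)*(1-q) * 0 := h4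
          _ = 0 := by ring
        nlinarith [sq_nonneg cc]
      have hAv0 : A v0 = 0 := by
        have := hc0 (A v0)
        rwa [inner_self_eq_zero] at this
      have : v0 = 0 := by
        apply hbij.injective
        rw [hAv0, map_zero]
      rw [this, norm_zero] at hv0norm
      norm_num at hv0norm
  refine ⟨-⟪A v0, v0⟫, by linarith, fun v => ?_⟩
  rcases eq_or_ne v 0 with rfl | hv
  · simp
  · have hnv : (0:ℝ) < ‖v‖ := norm_pos_iff.mpr hv
    set u := ‖v‖⁻¹ • v with hu
    have hunorm : ‖u‖ = 1 := by
      rw [hu, norm_smul, norm_inv, norm_norm, inv_mul_cancel₀ (ne_of_gt hnv)]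
    have hus : u ∈ sphere (0:Euc d) 1 := mem_sphere_zero_iff_norm.mpr hunorm
    have hQu : (⟪A u, u⟫ : ℝ) ≤ ⟪A v0, v0⟫ := hmax hus
    have hvu : v = ‖v‖ • u := by
      rw [hu, smul_smul, mul_inv_cancel₀ (ne_of_gt hnv), one_smul]
    have hscale : (⟪A v, v⟫ : ℝ) = ‖v‖^2 * ⟪A u, u⟫ := by
      conv_lhs => rw [hvu]
      rw [A.map_smul, real_inner_smul_left, real_inner_smul_right]
      ring
    have h2 : ‖v‖^2 * (⟪A u, u⟫:ℝ) ≤ ‖v‖^2 * ⟪A v0, v0⟫ :=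
      mul_le_mul_of_nonneg_left hQu (sq_nonneg _)
    rw [hscale]
    nlinarith [h2]

/-- Lyapunov-type trapping: once a gradient trajectory enters a ball around `xstar`
on which `⟪∇f z, z - xstar⟫ ≤ 0`, it stays in that ball forever. -/
lemma stay {c : ℝ → Euc d}
    (hc : ∀ t ∈ Ici (0:ℝ), HasDerivWithinAt c (gradient f (c t)) (Ici 0) t)
    {xstar : Euc d} {ρ : ℝ} (hρ : 0 < ρ)
    (hball : ∀ z ∈ closedBall xstar ρ, (⟪gradient f z, z - xstar⟫:ℝ) ≤ 0)
    {T : ℝ} (hT : 0 ≤ T) (hstart : ‖c T - xstar‖ < ρ) :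
    ∀ t, T ≤ t → ‖c t - xstar‖ < ρ := by
  by_contra hcon
  push_neg at hcon
  obtain ⟨t2, ht2T, ht2⟩ := hcon
  have hccont : ContinuousOn c (Ici 0) := fun t ht => (hc t ht).continuousWithinAt
  set V : ℝ → ℝ := fun t => ‖c t - xstar‖^2 with hV
  have hVcont : ContinuousOn V (Ici 0) := ((hccont.sub continuousOn_const).norm.pow 2)
  have hVT : V T < ρ^2 := by
    have := pow_lt_pow_left₀ hstart (norm_nonneg _) two_ne_zero
    simpa [hV] using this
  have hVt2 : ρ^2 ≤ V t2 := by
    have := pow_le_pow_left₀ hρ.le ht2 2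
    simpa [hV] using this
  set S := Icc T t2 ∩ V⁻¹' (Ici (ρ^2)) with hS
  have hsub2 : Icc T t2 ⊆ Ici (0:ℝ) := fun s hs => hT.trans hs.1
  have hSc : IsClosed S :=
    (hVcont.mono hsub2).preimage_isClosed_of_isClosed isClosed_Icc isClosed_Ici
  have hSne : S.Nonempty := ⟨t2, ⟨ht2T, le_refl _⟩, hVt2⟩
  have hSbdd : BddBelow S := ⟨T, fun s hs => hs.1.1⟩
  set t1 := sInf S with ht1def
  have hts : t1 ∈ S := hSc.csInf_mem hSne hSbdd
  have hTt1 : T < t1 := by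
    rcases lt_or_eq_of_le (le_csInf hSne fun b hb => hb.1.1) with h | h
    · exact h
    · exfalso
      have h2 : ρ^2 ≤ V (sInf S) := hts.2
      rw [← h] at h2
      linarith
  have hlt : ∀ s ∈ Ico T t1, V s < ρ^2 := by
    intro s hs
    by_contra hge
    push_neg at hge
    have hsS : s ∈ S := ⟨⟨hs.1, hs.2.le.trans hts.1.2⟩, hge⟩
    exact absurd (csInf_le hSbdd hsS) (not_le.mpr hs.2)
  have hIccsub : Icc T t1 ⊆ Ici (0:ℝ) := fun s hs => hT.trans hs.1
  have hVder : ∀ s ∈ Ioo T t1, HasDerivAt V (2 * ⟪gradient f (c s), c s - xstar⟫) s := by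
    intro s hs
    have hspos : (0:ℝ) < s := lt_of_le_of_lt hT hs.1
    have hder : HasDerivAt c (gradient f (c s)) s :=
      (hc s hspos.le).hasDerivAt (Ici_mem_nhds hspos)
    have h1 : HasDerivAt (fun t => (⟪c t - xstar, c t - xstar⟫:ℝ))
        (⟪c s - xstar, gradient f (c s)⟫ + ⟪gradient f (c s), c s - xstar⟫) s :=
      HasDerivAt.inner ℝ (hder.sub_const xstar) (hder.sub_const xstar)
    have heq : V = fun t => (⟪c t - xstar, c t - xstar⟫:ℝ) := by
      funext t
      rw [hV, real_inner_self_eq_norm_sq]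
    rw [heq]
    convert h1 using 1
    rw [real_inner_comm]
    ring
  have hanti : AntitoneOn V (Icc T t1) := by
    apply antitoneOn_of_deriv_nonpos (convex_Icc T t1) (hVcont.mono hIccsub)
    · rw [interior_Icc]
      exact fun s hs => ((hVder s hs).differentiableAt).differentiableWithinAt
    · rw [interior_Icc]
      intro s hs
      rw [(hVder s hs).deriv]
      have hVs : V s < ρ^2 := hlt s ⟨hs.1.le, hs.2⟩
      have hcs : c s ∈ closedBall xstar ρ := by
        rw [mem_closedBall, dist_eq_norm]
        have hVs' : ‖c s - xstar‖^2 < ρ^2 := hVs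
        nlinarith [norm_nonneg (c s - xstar), hVs', hρ]
      have := hball (c s) hcs
      linarith
  have hfin : V t1 ≤ V T := hanti ⟨le_refl T, hTt1.le⟩ ⟨hTt1.le, le_refl t1⟩ hTt1.le
  have := hts.2
  simp only [mem_preimage, mem_Ici] at this
  linarith

end AuxLemmas

/-- On the basin of attraction of a mode, the map sending a point `x` to the
image of its gradient ascent line `γ_x([0,∞))` is continuous for the Hausdorff distance. -/
theorem gradient_flow_hausdorff_continuous_on_basin
    {d : ℕ} (hd : 0 < d) (f : Euc d → ℝ) (hf : IsNiceDensity f)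
    (γ : Euc d → ℝ → Euc d) (hγ : ∀ x, IsGradFlow f x (γ x))
    (xstar : Euc d) (hmode : IsLocalMax f xstar)
    (x : Euc d) (hx : Tendsto (γ x) atTop (𝓝 xstar)) :
    ∀ η > (0:ℝ), ∃ δ > (0:ℝ), ∀ y : Euc d, ‖y - x‖ < δ →
      hausdorffDist (γ x '' Ici (0:ℝ)) (γ y '' Ici (0:ℝ)) < η := by
  obtain ⟨hpos, hint, hcoc, hdiff, hgdiff, hMf, hMg, ⟨M, hMh⟩, hUCf, hUCg, hUCh, hMorse⟩ := hf
  intro η hη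
  have hgrad0 : gradient f xstar = 0 := by
    rw [gradient, hmode.fderiv_eq_zero, map_zero]
  have hsym := hess_symm_aux hdiff hgdiff xstar
  have hnonpos := hess_nonpos hdiff hgdiff hUCh xstar hmode hgrad0
  obtain ⟨lam, hlam, hdef⟩ := hess_neg_def hd hnonpos hsym (hMorse xstar hgrad0)
  obtain ⟨ρ1, hρ1, happrox⟩ := grad_approx hgdiff hUCh xstar hgrad0 (half_pos hlam)
  set ρ := min (ρ1/2) (η/8) with hρdef
  have hρpos : 0 < ρ := lt_min (by linarith) (by linarith)
  have hρρ1 : ρ < ρ1 := lt_of_le_of_lt (min_le_left _ _) (by linarith)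
  have hρη : ρ ≤ η/8 := min_le_right _ _
  -- inward-pointing gradient on the ball of radius ρ
  have hball : ∀ z ∈ closedBall xstar ρ, (⟪gradient f z, z - xstar⟫:ℝ) ≤ 0 := by
    intro z hz
    have hz1 : z ∈ ball xstar ρ1 := by
      rw [mem_ball]
      exact lt_of_le_of_lt (mem_closedBall.mp hz) hρρ1
    have herr := happrox z hz1
    set w := z - xstar with hw
    have h1 : (⟪gradient f z, w⟫:ℝ)
        = ⟪hess f xstar w, w⟫ + ⟪gradient f z - hess f xstar w, w⟫ := by
      rw [← inner_add_left]
      congr 1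
      abel
    have h2 := hdef w
    have h3 : (⟪gradient f z - hess f xstar w, w⟫:ℝ) ≤ lam/2 * ‖w‖ * ‖w‖ := by
      have hcs := real_inner_le_norm (gradient f z - hess f xstar w) w
      nlinarith [mul_le_mul_of_nonneg_right herr (norm_nonneg w)]
    rw [h1]
    nlinarith [sq_nonneg ‖w‖]
  -- choose the time horizon T
  obtain ⟨T0, hT0⟩ := (Metric.tendsto_atTop.mp hx) (ρ/2) (by positivity)
  set T := max T0 0 with hTdef
  have hT0' : dist (γ x T) xstar < ρ/2 := hT0 T (le_max_left _ _)
  have hTnonneg : (0:ℝ) ≤ T := le_max_right _ _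
  -- the gradient is Lipschitz
  set L : NNReal := ⟨max M 0, le_max_right _ _⟩ with hL
  have hlip : LipschitzWith L (gradient f) := by
    apply lipschitzWith_of_nnnorm_fderiv_le hgdiff
    intro z
    rw [← NNReal.coe_le_coe, coe_nnnorm]
    exact le_trans (hMh z) (le_max_left _ _)
  set E := Real.exp (L * T) with hE
  have hEpos : 0 < E := Real.exp_pos _
  set δ0 := min (ρ/2) (η/4) with hδ0
  have hδ0pos : 0 < δ0 := lt_min (by positivity) (by linarith)
  refine ⟨δ0 / E, by positivity, fun y hy => ?_⟩
  -- flows and continuity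
  have hflow : ∀ z : Euc d, ∀ t ∈ Ico (0:ℝ) T,
      HasDerivWithinAt (γ z) (gradient f (γ z t)) (Ici t) t :=
    fun z t ht => ((hγ z).2 t ht.1).mono (Ici_subset_Ici.mpr ht.1)
  have hcont : ∀ z : Euc d, ContinuousOn (γ z) (Ici 0) :=
    fun z t ht => ((hγ z).2 t ht).continuousWithinAt
  -- Grönwall's inequality on [0, T]
  have hgron := dist_le_of_trajectories_ODE (v := fun _ z => gradient f z)
      (fun _ => hlip) ((hcont x).mono Icc_subset_Ici_self) (hflow x)
      ((hcont y).mono Icc_subset_Ici_self) (hflow y)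
      (le_refl (dist (γ x 0) (γ y 0)))
  have hd0 : dist (γ x 0) (γ y 0) < δ0 / E := by
    rw [(hγ x).1, (hγ y).1, dist_eq_norm, norm_sub_rev]
    exact hy
  have hgron' : ∀ t ∈ Icc (0:ℝ) T, dist (γ x t) (γ y t) < δ0 := by
    intro t ht
    have h1 := hgron t ht
    have h2 : Real.exp ((L:ℝ) * (t - 0)) ≤ E := by
      rw [hE]
      apply Real.exp_le_exp.mpr
      have hLnn : (0:ℝ) ≤ (L:ℝ) := L.coe_nonneg
      have := ht.2
      nlinarith
    have h3 : dist (γ x 0) (γ y 0) * Real.exp ((L:ℝ) * (t - 0))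
        ≤ dist (γ x 0) (γ y 0) * E := by
      exact mul_le_mul_of_nonneg_left h2 dist_nonneg
    have h4 : dist (γ x 0) (γ y 0) * E < (δ0 / E) * E :=
      mul_lt_mul_of_pos_right hd0 hEpos
    have h5 : (δ0 / E) * E = δ0 := div_mul_cancel₀ _ (ne_of_gt hEpos)
    linarith
  -- both trajectories are trapped in the ball of radius ρ after time T
  have hxT : ‖γ x T - xstar‖ < ρ := by
    rw [← dist_eq_norm]
    linarith
  have hyT : ‖γ y T - xstar‖ < ρ := by
    rw [← dist_eq_norm]
    have h1 : dist (γ y T) (γ x T) < δ0 := by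
      rw [dist_comm]; exact hgron' T ⟨hTnonneg, le_refl T⟩
    have h2 : δ0 ≤ ρ/2 := min_le_left _ _
    calc dist (γ y T) xstar ≤ dist (γ y T) (γ x T) + dist (γ x T) xstar := dist_triangle _ _ _
    _ < δ0 + ρ/2 := by linarith
    _ ≤ ρ := by linarith
  have hstayx := stay (hγ x).2 hρpos hball hTnonneg hxT
  have hstayy := stay (hγ y).2 hρpos hball hTnonneg hyT
  -- conclude via the Hausdorff distance
  have hδ0η : δ0 ≤ η/4 := min_le_right _ _
  have hmain : hausdorffDist (γ x '' Ici 0) (γ y '' Ici 0) ≤ η/2 := by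
    apply hausdorffDist_le_of_mem_dist (by linarith)
    · rintro a ⟨t, ht, rfl⟩
      rcases le_total t T with hcase | hcase
      · refine ⟨γ y t, mem_image_of_mem _ ht, ?_⟩
        have := hgron' t ⟨ht, hcase⟩
        linarith
      · refine ⟨γ y T, mem_image_of_mem _ hTnonneg, ?_⟩
        have h1 := hstayx t hcase
        have h2 := hyT
        calc dist (γ x t) (γ y T) ≤ dist (γ x t) xstar + dist xstar (γ y T) := dist_triangle _ _ _
        _ = ‖γ x t - xstar‖ + ‖γ y T - xstar‖ := by
              rw [dist_eq_norm, dist_comm, dist_eq_norm]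
        _ ≤ ρ + ρ := by linarith
        _ ≤ η/2 := by linarith
    · rintro a ⟨t, ht, rfl⟩
      rcases le_total t T with hcase | hcase
      · refine ⟨γ x t, mem_image_of_mem _ ht, ?_⟩
        have := hgron' t ⟨ht, hcase⟩
        rw [dist_comm] at this
        linarith
      · refine ⟨γ x T, mem_image_of_mem _ hTnonneg, ?_⟩
        have h1 := hstayy t hcase
        have h2 := hxT
        calc dist (γ y t) (γ x T) ≤ dist (γ y t) xstar + dist xstar (γ x T) := dist_triangle _ _ _
        _ = ‖γ y t - xstar‖ + ‖γ x T - xstar‖ := by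
              rw [dist_eq_norm, dist_comm, dist_eq_norm]
        _ ≤ ρ + ρ := by linarith
        _ ≤ η/2 := by linarith
  linarith
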